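/- For the cubic case in dimension N = 2 with Γ_cubic(z) = (μ/(16π(1-ν)|z|³))·[[ν+1-3ν z₂²/|z|², 3ν z₁z₂/|z|²],[3ν z₁z₂/|z|², ν+1-3ν z₁²/|z|²]], the formula ψ₀(b,n) = 2∫_ℝ Γ_cubic(n + t n^⊥) b·b dt evaluates, for any unit vector n and b ∈ ℝ², to ψ₀(b,n) = (μ/4π)(|b|² + η (b·n)²) with η = ν/(1-ν). -/

import Mathlib

open MeasureTheory Real Filter Set Topology

/-- The quadratic form `Γ_cubic(z) b · b` of the cubic interaction kernel. -/
noncomputable def Qcubic (μ ν : ℝ) (z b : ℝ × ℝ) : ℝ :=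
  μ / (16 * Real.pi * (1 - ν) * Real.sqrt (z.1 ^ 2 + z.2 ^ 2) ^ 3) *
    ((ν + 1 - 3 * ν * z.2 ^ 2 / (z.1 ^ 2 + z.2 ^ 2)) * b.1 ^ 2
      + 2 * (3 * ν * z.1 * z.2 / (z.1 ^ 2 + z.2 ^ 2)) * b.1 * b.2
      + (ν + 1 - 3 * ν * z.1 ^ 2 / (z.1 ^ 2 + z.2 ^ 2)) * b.2 ^ 2)

noncomputable def sA (t : ℝ) : ℝ := Real.sqrt (1 + t ^ 2)

lemma sA_pos (t : ℝ) : 0 < sA t := Real.sqrt_pos.2 (by positivity)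

lemma sA_sq (t : ℝ) : sA t ^ 2 = 1 + t ^ 2 := Real.sq_sqrt (by positivity)

lemma one_le_sA (t : ℝ) : 1 ≤ sA t := by
  have : Real.sqrt 1 ≤ Real.sqrt (1 + t ^ 2) := Real.sqrt_le_sqrt (by nlinarith)
  simpa [sA] using this

lemma sA_neg (t : ℝ) : sA (-t) = sA t := by simp [sA]

lemma continuous_sA : Continuous sA :=
  Real.continuous_sqrt.comp (by continuity)

lemma hasDerivAt_sA (t : ℝ) : HasDerivAt sA (t / sA t) t := by
  have h1 : HasDerivAt (fun t : ℝ => 1 + t ^ 2) (2 * t) t := by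
    simpa using ((hasDerivAt_pow 2 t).const_add 1)
  have h := (Real.hasDerivAt_sqrt (x := 1 + t ^ 2) (by positivity)).comp t h1
  have hs := (sA_pos t).ne'
  refine h.congr_deriv ?_; symm
  simp only [sA]
  field_simp

/-- antiderivative of `(sA t ^ 3)⁻¹` -/
lemma hasDerivAt_F3 (t : ℝ) : HasDerivAt (fun t => t / sA t) ((sA t ^ 3)⁻¹) t := by
  have h := (hasDerivAt_id t).div (hasDerivAt_sA t) (sA_pos t).ne'
  refine h.congr_deriv ?_; symm
  have hs := (sA_pos t).ne'
  have h2 := sA_sq t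
  simp only [id_eq]
  field_simp
  linear_combination (-1) * h2

/-- antiderivative of `(sA t ^ 5)⁻¹` -/
lemma hasDerivAt_F5 (t : ℝ) :
    HasDerivAt (fun t => (2 * t ^ 3 + 3 * t) / (3 * sA t ^ 3)) ((sA t ^ 5)⁻¹) t := by
  have hnum : HasDerivAt (fun t : ℝ => 2 * t ^ 3 + 3 * t) (6 * t ^ 2 + 3) t := by
    have := ((hasDerivAt_pow 3 t).const_mul 2).add ((hasDerivAt_id t).const_mul 3)
    refine this.congr_deriv ?_; symm; ring
  have hden : HasDerivAt (fun t : ℝ => 3 * sA t ^ 3) (9 * t * sA t) t := by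
    have := ((hasDerivAt_sA t).pow 3).const_mul 3
    refine this.congr_deriv ?_; symm
    have hs := (sA_pos t).ne'
    field_simp; ring
  have hden0 : (3 : ℝ) * sA t ^ 3 ≠ 0 := mul_ne_zero three_ne_zero (pow_ne_zero _ (sA_pos t).ne')
  have h := hnum.div hden hden0
  refine h.congr_deriv ?_; symm
  have hs := (sA_pos t).ne'
  have h2 := sA_sq t
  field_simp
  linear_combination (-(9 + 18 * t ^ 2)) * h2

/-- antiderivative of `t^2 * (sA t ^ 5)⁻¹` -/
lemma hasDerivAt_F5t2 (t : ℝ) :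
    HasDerivAt (fun t => t ^ 3 / (3 * sA t ^ 3)) (t ^ 2 * (sA t ^ 5)⁻¹) t := by
  have hnum : HasDerivAt (fun t : ℝ => t ^ 3) (3 * t ^ 2) t := by
    simpa using hasDerivAt_pow 3 t
  have hden : HasDerivAt (fun t : ℝ => 3 * sA t ^ 3) (9 * t * sA t) t := by
    have := ((hasDerivAt_sA t).pow 3).const_mul 3
    refine this.congr_deriv ?_; symm
    have hs := (sA_pos t).ne'
    field_simp; ring
  have hden0 : (3 : ℝ) * sA t ^ 3 ≠ 0 := mul_ne_zero three_ne_zero (pow_ne_zero _ (sA_pos t).ne')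
  have h := hnum.div hden hden0
  refine h.congr_deriv ?_; symm
  have hs := (sA_pos t).ne'
  have h2 := sA_sq t
  field_simp
  linear_combination (-(9 * t ^ 2)) * h2

/-- antiderivative of `t * (sA t ^ 5)⁻¹` -/
lemma hasDerivAt_F5t (t : ℝ) :
    HasDerivAt (fun t => -(1 / (3 * sA t ^ 3))) (t * (sA t ^ 5)⁻¹) t := by
  have hden : HasDerivAt (fun t : ℝ => 3 * sA t ^ 3) (9 * t * sA t) t := by
    have := ((hasDerivAt_sA t).pow 3).const_mul 3
    refine this.congr_deriv ?_; symm
    have hs := (sA_pos t).ne'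
    field_simp; ring
  have hden0 : (3 : ℝ) * sA t ^ 3 ≠ 0 := mul_ne_zero three_ne_zero (pow_ne_zero _ (sA_pos t).ne')
  have h := ((hasDerivAt_const t (1:ℝ)).div hden hden0).neg
  refine h.congr_deriv ?_; symm
  have hs := (sA_pos t).ne'
  have h2 := sA_sq t
  field_simp
  ring

lemma integrable_aux (f : ℝ → ℝ) (hc : Continuous f) (hb : ∀ t, |f t| ≤ (1 + t ^ 2)⁻¹) :
    Integrable f := by
  exact integrable_inv_one_add_sq.mono' hc.aestronglyMeasurable (ae_of_all _ hb)

lemma sA_cubed_ge (t : ℝ) : 1 + t ^ 2 ≤ sA t ^ 3 := by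
  nlinarith [sA_sq t, one_le_sA t, sA_pos t]

lemma integrable_f3 : Integrable (fun t : ℝ => (sA t ^ 3)⁻¹) := by
  refine integrable_aux _ ((continuous_sA.pow 3).inv₀ fun t => pow_ne_zero _ (sA_pos t).ne')
    fun t => ?_
  rw [abs_of_nonneg (inv_nonneg.2 (pow_nonneg (sA_pos t).le _))]
  exact inv_anti₀ (by positivity) (sA_cubed_ge t)

lemma integrable_f5 : Integrable (fun t : ℝ => (sA t ^ 5)⁻¹) := by
  refine integrable_aux _ ((continuous_sA.pow 5).inv₀ fun t => pow_ne_zero _ (sA_pos t).ne')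
    fun t => ?_
  rw [abs_of_nonneg (inv_nonneg.2 (pow_nonneg (sA_pos t).le _))]
  refine inv_anti₀ (by positivity) ?_
  have h5 : sA t ^ 5 = sA t ^ 3 * (1 + t ^ 2) := by rw [← sA_sq t]; ring
  rw [h5]
  nlinarith [sA_cubed_ge t, sq_nonneg t]

lemma integrable_f5t : Integrable (fun t : ℝ => t * (sA t ^ 5)⁻¹) := by
  refine integrable_aux _ (continuous_id.mul ((continuous_sA.pow 5).inv₀
    fun t => pow_ne_zero _ (sA_pos t).ne')) fun t => ?_
  rw [abs_mul, abs_of_nonneg (inv_nonneg.2 (pow_nonneg (sA_pos t).le _)),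
    ← div_eq_mul_inv, ← one_div, div_le_div_iff₀ (pow_pos (sA_pos t) 5) (by positivity)]
  have h1 : |t| ≤ sA t := by
    rw [← Real.sqrt_sq_eq_abs]; exact Real.sqrt_le_sqrt (by nlinarith)
  have h5 : sA t ^ 5 = sA t ^ 3 * (1 + t ^ 2) := by rw [← sA_sq t]; ring
  rw [h5]
  have h3 : sA t ≤ sA t ^ 3 := le_self_pow₀ (one_le_sA t) (by norm_num)
  nlinarith [abs_nonneg t, sq_nonneg t, mul_le_mul (h1.trans h3) (le_refl (1 + t ^ 2))
    (by positivity) (pow_nonneg (sA_pos t).le 3)]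

lemma integrable_f5t2 : Integrable (fun t : ℝ => t ^ 2 * (sA t ^ 5)⁻¹) := by
  refine integrable_aux _ ((continuous_pow 2).mul ((continuous_sA.pow 5).inv₀
    fun t => pow_ne_zero _ (sA_pos t).ne')) fun t => ?_
  rw [abs_of_nonneg (mul_nonneg (sq_nonneg t) (inv_nonneg.2 (pow_nonneg (sA_pos t).le _))),
    ← div_eq_mul_inv, ← one_div, div_le_div_iff₀ (pow_pos (sA_pos t) 5) (by positivity)]
  have h5 : sA t ^ 5 = sA t * (1 + t ^ 2) ^ 2 := by rw [← sA_sq t]; ring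
  rw [h5]
  nlinarith [one_le_sA t, sA_pos t, sq_nonneg t, sq_nonneg (1 + t ^ 2)]

lemma tendsto_sA_atTop : Tendsto sA atTop atTop := by
  refine tendsto_atTop_mono (fun t => ?_) tendsto_id
  have h1 : |t| ≤ sA t := by
    rw [← Real.sqrt_sq_eq_abs]; exact Real.sqrt_le_sqrt (by nlinarith)
  exact le_trans (le_abs_self t) h1

-- key atTop limits
lemma lim3_top : Tendsto (fun t => t / sA t) atTop (𝓝 1) := by
  have h0 : Tendsto (fun t : ℝ => (Real.sqrt ((t⁻¹) ^ 2 + 1))⁻¹) atTop (𝓝 1) := by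
    have h1 : Tendsto (fun t : ℝ => (t⁻¹) ^ 2 + 1) atTop (𝓝 1) := by
      have := (tendsto_inv_atTop_zero (𝕜 := ℝ)).pow 2
      simpa using this.add_const 1
    have h2 := (Real.continuous_sqrt.tendsto 1).comp h1
    have h3 := h2.inv₀ (by simp)
    simpa using h3
  refine h0.congr' ?_
  filter_upwards [eventually_gt_atTop (0 : ℝ)] with t ht
  have hts : 1 + t ^ 2 = t ^ 2 * ((t⁻¹) ^ 2 + 1) := by field_simp
  have : sA t = t * Real.sqrt ((t⁻¹) ^ 2 + 1) := by
    rw [sA, hts, Real.sqrt_mul (sq_nonneg t), Real.sqrt_sq ht.le]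
  rw [this]
  have hpos : (0:ℝ) < Real.sqrt ((t⁻¹) ^ 2 + 1) := Real.sqrt_pos.2 (by positivity)
  field_simp

lemma lim5_top : Tendsto (fun t => (2 * t ^ 3 + 3 * t) / (3 * sA t ^ 3)) atTop (𝓝 (2/3)) := by
  have h0 : Tendsto (fun t : ℝ => (2 + 3 * (t⁻¹) ^ 2) / (3 * Real.sqrt ((t⁻¹) ^ 2 + 1) ^ 3))
      atTop (𝓝 (2/3)) := by
    have hinv : Tendsto (fun t : ℝ => (t⁻¹ : ℝ)) atTop (𝓝 0) := tendsto_inv_atTop_zero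
    have hnum : Tendsto (fun t : ℝ => 2 + 3 * (t⁻¹) ^ 2) atTop (𝓝 2) := by
      have := (hinv.pow 2).const_mul 3
      simpa using (this.const_add 2)
    have hden : Tendsto (fun t : ℝ => 3 * Real.sqrt ((t⁻¹) ^ 2 + 1) ^ 3) atTop (𝓝 3) := by
      have h1 : Tendsto (fun t : ℝ => (t⁻¹) ^ 2 + 1) atTop (𝓝 1) := by
        simpa using (hinv.pow 2).add_const 1
      have h2 := ((Real.continuous_sqrt.tendsto 1).comp h1).pow 3
      have := h2.const_mul 3
      simpa using this
    have := hnum.div hden (by norm_num)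
    exact this
  refine h0.congr' ?_
  filter_upwards [eventually_gt_atTop (0 : ℝ)] with t ht
  have hts : 1 + t ^ 2 = t ^ 2 * ((t⁻¹) ^ 2 + 1) := by field_simp
  have hA : sA t = t * Real.sqrt ((t⁻¹) ^ 2 + 1) := by
    rw [sA, hts, Real.sqrt_mul (sq_nonneg t), Real.sqrt_sq ht.le]
  rw [hA]
  have hpos : (0:ℝ) < Real.sqrt ((t⁻¹) ^ 2 + 1) := Real.sqrt_pos.2 (by positivity)
  field_simp

lemma lim5t2_top : Tendsto (fun t => t ^ 3 / (3 * sA t ^ 3)) atTop (𝓝 (1/3)) := by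
  have h0 : Tendsto (fun t : ℝ => (3 * Real.sqrt ((t⁻¹) ^ 2 + 1) ^ 3)⁻¹) atTop (𝓝 (1/3)) := by
    have hinv : Tendsto (fun t : ℝ => (t⁻¹ : ℝ)) atTop (𝓝 0) := tendsto_inv_atTop_zero
    have hden : Tendsto (fun t : ℝ => 3 * Real.sqrt ((t⁻¹) ^ 2 + 1) ^ 3) atTop (𝓝 3) := by
      have h1 : Tendsto (fun t : ℝ => (t⁻¹) ^ 2 + 1) atTop (𝓝 1) := by
        simpa using (hinv.pow 2).add_const 1
      have h2 := ((Real.continuous_sqrt.tendsto 1).comp h1).pow 3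
      simpa using h2.const_mul 3
    have := hden.inv₀ (by norm_num)
    norm_num at this
    convert this using 2
    norm_num
  refine h0.congr' ?_
  filter_upwards [eventually_gt_atTop (0 : ℝ)] with t ht
  have hts : 1 + t ^ 2 = t ^ 2 * ((t⁻¹) ^ 2 + 1) := by field_simp
  have hA : sA t = t * Real.sqrt ((t⁻¹) ^ 2 + 1) := by
    rw [sA, hts, Real.sqrt_mul (sq_nonneg t), Real.sqrt_sq ht.le]
  rw [hA]
  have hpos : (0:ℝ) < Real.sqrt ((t⁻¹) ^ 2 + 1) := Real.sqrt_pos.2 (by positivity)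
  field_simp

lemma lim5t_top : Tendsto (fun t => -(1 / (3 * sA t ^ 3))) atTop (𝓝 0) := by
  have h1 : Tendsto (fun t : ℝ => 3 * sA t ^ 3) atTop atTop := by
    refine tendsto_atTop_mono (fun t => ?_) tendsto_sA_atTop
    nlinarith [le_self_pow₀ (one_le_sA t) (three_ne_zero), sA_pos t]
  have := (tendsto_inv_atTop_zero.comp h1).neg
  simpa [one_div] using this

-- transfer to atBot using oddness
lemma odd_atBot {F : ℝ → ℝ} {L : ℝ} (hodd : ∀ t, F (-t) = -F t)
    (htop : Tendsto F atTop (𝓝 L)) : Tendsto F atBot (𝓝 (-L)) := by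
  have h1 : Tendsto (fun t => F (-t)) atBot (𝓝 L) :=
    htop.comp tendsto_neg_atBot_atTop
  have h2 : Tendsto (fun t => -F (-t)) atBot (𝓝 (-L)) := h1.neg
  refine h2.congr fun t => ?_
  rw [hodd]; ring

lemma even_atBot {F : ℝ → ℝ} {L : ℝ} (heven : ∀ t, F (-t) = F t)
    (htop : Tendsto F atTop (𝓝 L)) : Tendsto F atBot (𝓝 L) := by
  have h1 : Tendsto (fun t => F (-t)) atBot (𝓝 L) := htop.comp tendsto_neg_atBot_atTop
  exact h1.congr fun t => heven t

lemma I3 : ∫ t : ℝ, (sA t ^ 3)⁻¹ = 2 := by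
  have hbot : Tendsto (fun t => t / sA t) atBot (𝓝 (-1)) :=
    odd_atBot (fun t => by rw [sA_neg]; ring) lim3_top
  have := MeasureTheory.integral_of_hasDerivAt_of_tendsto hasDerivAt_F3 integrable_f3 hbot lim3_top
  rw [this]; norm_num

lemma I5 : ∫ t : ℝ, (sA t ^ 5)⁻¹ = 4/3 := by
  have hbot : Tendsto (fun t => (2 * t ^ 3 + 3 * t) / (3 * sA t ^ 3)) atBot (𝓝 (-(2/3))) :=
    odd_atBot (fun t => by rw [sA_neg]; ring) lim5_top
  have := MeasureTheory.integral_of_hasDerivAt_of_tendsto hasDerivAt_F5 integrable_f5 hbot lim5_top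
  rw [this]; norm_num

lemma I5t2 : ∫ t : ℝ, t ^ 2 * (sA t ^ 5)⁻¹ = 2/3 := by
  have hbot : Tendsto (fun t => t ^ 3 / (3 * sA t ^ 3)) atBot (𝓝 (-(1/3))) :=
    odd_atBot (fun t => by rw [sA_neg]; ring) lim5t2_top
  have := MeasureTheory.integral_of_hasDerivAt_of_tendsto hasDerivAt_F5t2 integrable_f5t2 hbot
    lim5t2_top
  rw [this]; norm_num

lemma I5t : ∫ t : ℝ, t * (sA t ^ 5)⁻¹ = 0 := by
  have hbot : Tendsto (fun t => -(1 / (3 * sA t ^ 3))) atBot (𝓝 0) :=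
    even_atBot (fun t => by rw [sA_neg]) lim5t_top
  have := MeasureTheory.integral_of_hasDerivAt_of_tendsto hasDerivAt_F5t integrable_f5t hbot
    lim5t_top
  rw [this]; norm_num

lemma integrand_eq (μ ν : ℝ) (h1ν : (1:ℝ) - ν ≠ 0) (n b : ℝ × ℝ)
    (hn : n.1 ^ 2 + n.2 ^ 2 = 1) (t : ℝ) :
    Qcubic μ ν (n.1 - t * n.2, n.2 + t * n.1) b =
      μ / (16 * Real.pi * (1 - ν)) * ((ν + 1) * (b.1 ^ 2 + b.2 ^ 2)) * (sA t ^ 3)⁻¹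
      - μ / (16 * Real.pi * (1 - ν)) * (3 * ν * (n.2 * b.1 - n.1 * b.2) ^ 2) * (sA t ^ 5)⁻¹
      - μ / (16 * Real.pi * (1 - ν)) *
          (6 * ν * (n.2 * b.1 - n.1 * b.2) * (n.1 * b.1 + n.2 * b.2)) * (t * (sA t ^ 5)⁻¹)
      - μ / (16 * Real.pi * (1 - ν)) * (3 * ν * (n.1 * b.1 + n.2 * b.2) ^ 2)
          * (t ^ 2 * (sA t ^ 5)⁻¹) := by
  have hX : (n.1 - t * n.2) ^ 2 + (n.2 + t * n.1) ^ 2 = 1 + t ^ 2 := by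
    linear_combination (1 + t ^ 2) * hn
  unfold Qcubic
  simp only [hX]
  rw [show Real.sqrt (1 + t ^ 2) = sA t from rfl]
  have hs := (sA_pos t).ne'
  have h2 := sA_sq t
  have h3 : sA t ^ 3 = sA t * (1 + t ^ 2) := by rw [← h2]; ring
  have h5 : sA t ^ 5 = sA t * (1 + t ^ 2) ^ 2 := by rw [← h2]; ring
  rw [h3, h5]
  have hden : (1:ℝ) + t ^ 2 ≠ 0 := by positivity
  field_simp
  ring

theorem stmt10 (μ ν : ℝ) (hμ : 0 < μ) (hν : ν ∈ Set.Ioo (-1 : ℝ) (1 / 2))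
    (n : ℝ × ℝ) (hn : n.1 ^ 2 + n.2 ^ 2 = 1) (b : ℝ × ℝ) :
    2 * ∫ t : ℝ, Qcubic μ ν (n.1 - t * n.2, n.2 + t * n.1) b =
      μ / (4 * Real.pi) *
        ((b.1 ^ 2 + b.2 ^ 2) + (ν / (1 - ν)) * (b.1 * n.1 + b.2 * n.2) ^ 2) := by
  have h1ν : (1:ℝ) - ν ≠ 0 := by have := hν.2; norm_num at this ⊢; linarith
  set K := μ / (16 * Real.pi * (1 - ν)) with hK
  set A := K * ((ν + 1) * (b.1 ^ 2 + b.2 ^ 2)) with hA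
  set B := K * (3 * ν * (n.2 * b.1 - n.1 * b.2) ^ 2) with hB
  set C := K * (6 * ν * (n.2 * b.1 - n.1 * b.2) * (n.1 * b.1 + n.2 * b.2)) with hC
  set D := K * (3 * ν * (n.1 * b.1 + n.2 * b.2) ^ 2) with hD
  have hfun : (fun t : ℝ => Qcubic μ ν (n.1 - t * n.2, n.2 + t * n.1) b) =
      fun t => A * (sA t ^ 3)⁻¹ - B * (sA t ^ 5)⁻¹ - C * (t * (sA t ^ 5)⁻¹)
        - D * (t ^ 2 * (sA t ^ 5)⁻¹) :=
    funext fun t => integrand_eq μ ν h1ν n b hn t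
  rw [hfun]
  have i3 := integrable_f3.const_mul A
  have i5 := integrable_f5.const_mul B
  have i5t := integrable_f5t.const_mul C
  have i5t2 := integrable_f5t2.const_mul D
  have i35 : Integrable (fun t : ℝ => A * (sA t ^ 3)⁻¹ - B * (sA t ^ 5)⁻¹) := i3.sub i5
  have i35t : Integrable (fun t : ℝ =>
      A * (sA t ^ 3)⁻¹ - B * (sA t ^ 5)⁻¹ - C * (t * (sA t ^ 5)⁻¹)) := i35.sub i5t
  rw [MeasureTheory.integral_sub i35t i5t2,
    MeasureTheory.integral_sub i35 i5t, MeasureTheory.integral_sub i3 i5,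
    MeasureTheory.integral_const_mul, MeasureTheory.integral_const_mul,
    MeasureTheory.integral_const_mul, MeasureTheory.integral_const_mul, I3, I5, I5t, I5t2]
  have hc : (n.2 * b.1 - n.1 * b.2) ^ 2 =
      (b.1 ^ 2 + b.2 ^ 2) - (n.1 * b.1 + n.2 * b.2) ^ 2 := by
    linear_combination (b.1 ^ 2 + b.2 ^ 2) * hn
  rw [hA, hB, hC, hD, hK, hc]
  have hπ := Real.pi_ne_zero
  field_simp
  ring
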